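/- There exists a constant c > 0 depending only on D such that for every n ≥ 2, every M > 0, every θ0 ∈ S^D(M), and all D ≤ α1 < α2 ≤ 2D: Var_{θ0}( B̂_{n,k_n}²(α1) − B̂_{n,k_n}²(α2) ) ≤ c (α2 − α1)² (log n)² ( B_{n,k_n}²(α2;θ0)/n + n^{−(1+4D)/(1+2D)} ). Here Var_{θ0}( B̂_{n,k_n}²(α1) − B̂_{n,k_n}²(α2) ) = ∑_{i=1}^{k_n} ( i^{2+4α1}/(i^{1+2α1}+n)² − i^{2+4α2}/(i^{1+2α2}+n)² )² (2θ0,i²/n + 4/n²). -/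

import Mathlib

open MeasureTheory ProbabilityTheory Real Filter
open scoped NNReal ENNReal

noncomputable section

/-- The real index corresponding to coordinate `i : ℕ` is `i + 1`
(sequences are indexed by `1, 2, 3, ...` in the paper). -/
def idx (i : ℕ) : ℝ := (i : ℝ) + 1

/-- ℓ²-norm of a sequence. -/
def l2norm (x : ℕ → ℝ) : ℝ := Real.sqrt (∑' i, (x i) ^ 2)

/-- The Sobolev ball `S^β(M) = {θ ∈ ℓ² : ∑ i^{2β} θ_i² ≤ M}`. -/
def sobolev (β M : ℝ) : Set (ℕ → ℝ) :=
  {θ | Summable (fun i => (θ i) ^ 2) ∧ ∑' i, (idx i) ^ (2 * β) * (θ i) ^ 2 ≤ M}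

/-- Truncation level `k_n = n^{2/(1+4D)}`. -/
def khat (D : ℝ) (n : ℕ) : ℕ := ⌊(n : ℝ) ^ (2 / (1 + 4 * D))⌋₊

/-- Truncated squared bias `B_{n,k}²(α;θ0) = ∑_{i=1}^k i^{2+4α} θ0_i²/(i^{1+2α}+n)²`. -/
def biasSqTrunc (n k : ℕ) (α : ℝ) (θ0 : ℕ → ℝ) : ℝ :=
  ∑ i ∈ Finset.range k, (idx i) ^ (2 + 4 * α) * (θ0 i) ^ 2 / ((idx i) ^ (1 + 2 * α) + n) ^ 2

/-- The constant `C0 = ((1+4D)² log(25 C1⁻² γ⁻¹)/2) ∨ 0`. -/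
def C0def (D C1 γ : ℝ) : ℝ := max ((1 + 4 * D) ^ 2 * Real.log (25 * (C1 ^ 2)⁻¹ * γ⁻¹) / 2) 0

/-- The cap `(2D − C0/log n) ∨ D`. -/
def capVal (D C1 γ : ℝ) (n : ℕ) : ℝ := max (2 * D - C0def D C1 γ / Real.log n) D

open Classical in
/-- `(inf S) ∧ c` with the convention that the infimum of the empty set is `+∞`. -/
def infAux (S : Set ℝ) (c : ℝ) : ℝ := if S.Nonempty then min (sInf S) c else c

/-- `α̲_n`. -/
def underAlpha (D C1 γ : ℝ) (n : ℕ) (θ0 : ℕ → ℝ) : ℝ :=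
  infAux {α | D ≤ α ∧ C1 ^ 2 / 2 * (n : ℝ) ^ (-(2 * α) / (1 + 2 * α)) ≤ biasSqTrunc n (khat D n) α θ0}
    (capVal D C1 γ n)

/-- `ᾱ_n`. -/
def overAlpha (D C1 γ : ℝ) (n : ℕ) (θ0 : ℕ → ℝ) : ℝ :=
  infAux {α | D ≤ α ∧ 2 * C1 ^ 2 * (n : ℝ) ^ (-(2 * α) / (1 + 2 * α)) ≤ biasSqTrunc n (khat D n) α θ0}
    (capVal D C1 γ n)

lemma sv6_one_sub_rpow_le (x e : ℝ) (hx : 1 ≤ x) :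
    1 - x ^ (-e) ≤ e * Real.log x := by
  have hx0 : (0:ℝ) < x := lt_of_lt_of_le one_pos hx
  rw [Real.rpow_def_of_pos hx0]
  have h2 : Real.log x * (-e) = -(e * Real.log x) := by ring
  rw [h2]
  have := Real.add_one_le_exp (-(e * Real.log x))
  linarith

lemma sv6_core (N t1 t2 r : ℝ) (hN : 0 < N) (ht1 : 0 < t1) (ht : t1 ≤ t2)
    (hr : 1 - t1/t2 ≤ r) :
    t1^2/(t1+N)^2 ≤ t2^2/(t2+N)^2 ∧ t2^2/(t2+N)^2 ≤ 1 ∧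
    t2^2/(t2+N)^2 - t1^2/(t1+N)^2 ≤ 2*r * (t2^2/(t2+N)^2) ∧
    t2^2/(t2+N)^2 - t1^2/(t1+N)^2 ≤ 2*r * (N/t1) := by
  have ht2 : 0 < t2 := lt_of_lt_of_le ht1 ht
  have hA : 0 < t1 + N := by linarith
  have hB : 0 < t2 + N := by linarith
  have hr0 : 0 ≤ r := by
    have : t1/t2 ≤ 1 := (div_le_one ht2).2 ht
    linarith
  have hcross : t1*(t2+N) ≤ t2*(t1+N) := by nlinarith
  have hcross0 : 0 ≤ t1*(t2+N) := by positivity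
  have hsq := mul_le_mul hcross hcross hcross0 (by positivity)
  have hmono : t1^2/(t1+N)^2 ≤ t2^2/(t2+N)^2 := by
    rw [div_le_div_iff₀ (by positivity) (by positivity)]
    nlinarith [hsq]
  have h3 : t2 - t1 ≤ r * t2 := by
    have := mul_le_mul_of_nonneg_right hr (le_of_lt ht2)
    rw [sub_mul, div_mul_cancel₀] at this
    · linarith
    · exact ne_of_gt ht2
  refine ⟨hmono, ?_, ?_, ?_⟩
  · rw [div_le_one (by positivity)]
    nlinarith
  · have h1 : t1^2/(t2+N)^2 ≤ t1^2/(t1+N)^2 := by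
      apply div_le_div_of_nonneg_left (by positivity) (by positivity)
      nlinarith
    have h2 : t2^2/(t2+N)^2 - t1^2/(t2+N)^2 ≤ 2*r*(t2^2/(t2+N)^2) := by
      rw [div_sub_div_same]
      rw [div_le_iff₀ (by positivity)] at *
      have key : t2^2 - t1^2 ≤ 2*r*t2^2 := by nlinarith
      calc t2^2 - t1^2 ≤ 2*r*t2^2 := key
        _ = 2*r*(t2^2/(t2+N)^2) * (t2+N)^2 := by field_simp
    linarith
  · have key : t2^2/(t2+N)^2 - t1^2/(t1+N)^2 ≤ 2*N*(t2-t1)/(t1*t2) := by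
      rw [div_sub_div _ _ (by positivity) (by positivity),
        div_le_div_iff₀ (by positivity) (by positivity)]
      have h1 : (2*t1*t2 + N*(t1+t2)) * (t1*t2) ≤ 2*((t1+N)*(t2+N))^2 := by
        nlinarith [mul_pos ht1 ht2, mul_pos hA hB, mul_pos ht1 hN, mul_pos ht2 hN,
          mul_pos (mul_pos ht1 ht2) (mul_pos ht1 hN), mul_pos (mul_pos ht1 ht2) (mul_pos ht2 hN),
          mul_pos (mul_pos ht1 ht2) (mul_pos hN hN)]
      have h2 : 0 ≤ N*(t2-t1) := by nlinarith
      nlinarith [mul_le_mul_of_nonneg_left h1 h2]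
    have h4 : 2*N*(t2-t1)/(t1*t2) ≤ 2*r*(N/t1) := by
      rw [div_le_iff₀ (by positivity)]
      have heq : 2*r*(N/t1)*(t1*t2) = 2*r*N*t2 := by field_simp
      rw [heq]
      nlinarith
    linarith

lemma sv6_sum_inv_sq (m k : ℕ) (hm : 1 ≤ m) :
    ∑ i ∈ Finset.Ico m k, (1:ℝ)/((i:ℝ)+1)^2 ≤ 1/(m:ℝ) := by
  have hm0 : (0:ℝ) < m := by exact_mod_cast hm
  rcases le_or_gt k m with h | h
  · rw [Finset.Ico_eq_empty (by omega)]
    simp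
  have step : ∀ i ∈ Finset.Ico m k, (1:ℝ)/((i:ℝ)+1)^2 ≤ 1/(i:ℝ) - 1/((i:ℝ)+1) := by
    intro i hi
    have hi1 : 1 ≤ i := le_trans hm (Finset.mem_Ico.1 hi).1
    have hi0 : (0:ℝ) < i := by exact_mod_cast hi1
    rw [div_sub_div _ _ (ne_of_gt hi0) (by positivity)]
    rw [div_le_div_iff₀ (by positivity) (by positivity)]
    nlinarith
  have tele : ∑ i ∈ Finset.Ico m k, ((1:ℝ)/(i:ℝ) - 1/((i:ℝ)+1)) = 1/(m:ℝ) - 1/(k:ℝ) := by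
    rw [Finset.sum_Ico_eq_sum_range]
    have h2 := Finset.sum_range_sub' (fun j => (1:ℝ)/((m:ℝ)+(j:ℝ))) (k - m)
    simp only [Nat.cast_zero, add_zero] at h2
    have h4 : ((m:ℝ) + ((k-m : ℕ):ℝ)) = (k:ℝ) := by
      rw [Nat.cast_sub h.le]; ring
    rw [← h4, ← h2]
    apply Finset.sum_congr rfl
    intro j hj
    push_cast
    ring_nf
  calc ∑ i ∈ Finset.Ico m k, (1:ℝ)/((i:ℝ)+1)^2
      ≤ ∑ i ∈ Finset.Ico m k, ((1:ℝ)/(i:ℝ) - 1/((i:ℝ)+1)) := Finset.sum_le_sum step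
    _ = 1/(m:ℝ) - 1/(k:ℝ) := tele
    _ ≤ 1/(m:ℝ) := by
        have : (0:ℝ) ≤ 1/(k:ℝ) := by positivity
        linarith

lemma sv6_sumq (n k : ℕ) (hn : 2 ≤ n) (β : ℝ) (hβ : 0 < β) :
    ∑ i ∈ Finset.range k, min 1 (((n:ℝ)/(idx i)^(1+2*β))^2)
      ≤ 3 * (n:ℝ)^(1/(1+2*β)) := by
  have hn1 : (1:ℝ) ≤ n := by exact_mod_cast le_trans one_le_two hn
  have hn0 : (0:ℝ) < n := by linarith
  have hβ1 : (0:ℝ) < 1+2*β := by linarith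
  set e := 1/(1+2*β) with he
  have he0 : 0 < e := by positivity
  have hne : (1:ℝ) ≤ (n:ℝ)^e := Real.one_le_rpow hn1 he0.le
  have hne0 : (0:ℝ) < (n:ℝ)^e := by positivity
  set m := ⌊(n:ℝ)^e⌋₊ with hmdef
  have hm1 : 1 ≤ m := Nat.le_floor (by exact_mod_cast hne)
  have hm0 : (0:ℝ) < m := by exact_mod_cast hm1
  have hmle : (m:ℝ) ≤ (n:ℝ)^e := Nat.floor_le (by positivity)
  have hmge : (n:ℝ)^e ≤ (m:ℝ)+1 := (Nat.lt_floor_add_one _).le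
  have hterm1 : ∀ i, min 1 (((n:ℝ)/(idx i)^(1+2*β))^2) ≤ 1 := fun i => min_le_left _ _
  set A0 := (((m:ℝ)+1)^(2*β))^2 with hA0
  have hA0pos : 0 < A0 := by positivity
  have hbound : ∀ i ∈ Finset.Ico m k,
      min 1 (((n:ℝ)/(idx i)^(1+2*β))^2) ≤ ((n:ℝ)^2/A0) * (1/((i:ℝ)+1)^2) := by
    intro i hi
    have him : m ≤ i := (Finset.mem_Ico.1 hi).1
    have hmi : (m:ℝ) ≤ i := by exact_mod_cast him
    have hxi : ((m:ℝ)+1) ≤ idx i := by unfold idx; linarith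
    have hx0 : (0:ℝ) < idx i := lt_of_lt_of_le (by linarith) hxi
    refine le_trans (min_le_right _ _) ?_
    rw [div_pow]
    have hsplit : ((idx i)^(1+2*β))^2 = ((idx i)^(2*β))^2 * ((i:ℝ)+1)^2 := by
      have hidx : idx i = (i:ℝ)+1 := rfl
      rw [← hidx, ← Real.rpow_natCast ((idx i)^(1+2*β)) 2, ← Real.rpow_mul hx0.le,
        ← Real.rpow_natCast ((idx i)^(2*β)) 2, ← Real.rpow_mul hx0.le,
        ← Real.rpow_natCast (idx i) 2, ← Real.rpow_add hx0]
      norm_num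
      ring_nf
    rw [hsplit]
    have hmono : A0 ≤ ((idx i)^(2*β))^2 := by
      rw [hA0]
      exact pow_le_pow_left₀ (by positivity) (Real.rpow_le_rpow (by positivity) hxi (by positivity)) 2
    have hrhs : ((n:ℝ)^2/A0) * (1/((i:ℝ)+1)^2) = (n:ℝ)^2/(A0 * ((i:ℝ)+1)^2) := by
      field_simp
    rw [hrhs]
    apply div_le_div_of_nonneg_left (by positivity) (by positivity)
    exact mul_le_mul_of_nonneg_right hmono (by positivity)
  have htail : ∑ i ∈ Finset.Ico m k, min 1 (((n:ℝ)/(idx i)^(1+2*β))^2)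
      ≤ 2 * (n:ℝ)^e := by
    calc ∑ i ∈ Finset.Ico m k, min 1 (((n:ℝ)/(idx i)^(1+2*β))^2)
        ≤ ∑ i ∈ Finset.Ico m k, ((n:ℝ)^2/A0) * (1/((i:ℝ)+1)^2) := Finset.sum_le_sum hbound
      _ = ((n:ℝ)^2/A0) * ∑ i ∈ Finset.Ico m k, (1:ℝ)/((i:ℝ)+1)^2 := by
          rw [Finset.mul_sum]
      _ ≤ ((n:ℝ)^2/A0) * (1/(m:ℝ)) := by
          apply mul_le_mul_of_nonneg_left (sv6_sum_inv_sq m k hm1) (by positivity)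
      _ ≤ ((n:ℝ)^2/A0) * (2/((m:ℝ)+1)) := by
          apply mul_le_mul_of_nonneg_left ?_ (by positivity)
          rw [div_le_div_iff₀ hm0 (by linarith)]
          have hm1' : (1:ℝ) ≤ (m:ℝ) := by exact_mod_cast hm1
          linarith
      _ = 2 * ((n:ℝ)^2 / (A0 * ((m:ℝ)+1))) := by field_simp
      _ ≤ 2 * ((n:ℝ)^2 / ((n:ℝ)^e)^(1+4*β)) := by
          apply mul_le_mul_of_nonneg_left ?_ (by norm_num)
          apply div_le_div_of_nonneg_left (by positivity) (by positivity)
          have hexp : ((n:ℝ)^e)^(1+4*β) = (((n:ℝ)^e)^(2*β))^2 * ((n:ℝ)^e)^(1:ℝ) := by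
            rw [show (1+4*β) = 2*β*(2:ℝ)+1 by ring, Real.rpow_add hne0, Real.rpow_one,
              Real.rpow_mul hne0.le, Real.rpow_two]
          rw [hexp, Real.rpow_one]
          have h1 : ((n:ℝ)^e)^(2*β) ≤ ((m:ℝ)+1)^(2*β) :=
            Real.rpow_le_rpow (by positivity) hmge (by positivity)
          have h2 : (((n:ℝ)^e)^(2*β))^2 ≤ A0 := pow_le_pow_left₀ (by positivity) h1 2
          exact mul_le_mul h2 hmge (by positivity) hA0pos.le
      _ = 2 * (n:ℝ)^e := by
          rw [← Real.rpow_mul hn0.le, ← Real.rpow_natCast (n:ℝ) 2, ← Real.rpow_sub hn0]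
          norm_num
          rw [he]
          congr 1
          field_simp
          ring
  rcases le_or_gt k m with hkm | hmk
  · calc ∑ i ∈ Finset.range k, min 1 (((n:ℝ)/(idx i)^(1+2*β))^2)
        ≤ ∑ i ∈ Finset.range k, 1 := Finset.sum_le_sum (fun i _ => hterm1 i)
      _ = (k:ℝ) := by simp
      _ ≤ (m:ℝ) := by exact_mod_cast hkm
      _ ≤ (n:ℝ)^e := hmle
      _ ≤ 3 * (n:ℝ)^e := by linarith
  · rw [← Finset.sum_range_add_sum_Ico _ hmk.le]
    have hhead : ∑ i ∈ Finset.range m, min 1 (((n:ℝ)/(idx i)^(1+2*β))^2) ≤ (n:ℝ)^e := by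
      calc ∑ i ∈ Finset.range m, min 1 (((n:ℝ)/(idx i)^(1+2*β))^2)
          ≤ ∑ i ∈ Finset.range m, 1 := Finset.sum_le_sum (fun i _ => hterm1 i)
        _ = (m:ℝ) := by simp
        _ ≤ (n:ℝ)^e := hmle
    linarith

set_option maxHeartbeats 2000000 in
/-- Lipschitz-type variance bound for the bias estimator
(the variance is written out explicitly as in the statement). -/
theorem stmt_6 (D : ℝ) (hD : 0 < D) :
    ∃ c : ℝ, 0 < c ∧ ∀ (n : ℕ), 2 ≤ n → ∀ (M : ℝ), 0 < M → ∀ θ0 ∈ sobolev D M,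
      ∀ α1 α2 : ℝ, D ≤ α1 → α1 < α2 → α2 ≤ 2 * D →
      (∑ i ∈ Finset.range (khat D n),
          ((idx i) ^ (2 + 4 * α1) / ((idx i) ^ (1 + 2 * α1) + n) ^ 2
            - (idx i) ^ (2 + 4 * α2) / ((idx i) ^ (1 + 2 * α2) + n) ^ 2) ^ 2
          * (2 * (θ0 i) ^ 2 / n + 4 / (n : ℝ) ^ 2))
        ≤ c * (α2 - α1) ^ 2 * (Real.log n) ^ 2 *
            (biasSqTrunc n (khat D n) α2 θ0 / n + (n : ℝ) ^ (-(1 + 4 * D) / (1 + 2 * D))) := by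
  refine ⟨768, by norm_num, ?_⟩
  intro n hn M hM θ0 hθ0 α1 α2 hDα1 h12 hα2D
  have hn1 : (1:ℝ) < n := by exact_mod_cast lt_of_lt_of_le one_lt_two hn
  have hN0 : (0:ℝ) < n := by linarith
  set k := khat D n with hk
  set L := Real.log (n:ℝ) with hLdef
  have hL : 0 < L := Real.log_pos hn1
  have hα1 : 0 < α1 := lt_of_lt_of_le hD hDα1
  have hδ : 0 < α2 - α1 := by linarith
  set E := 8*(α2-α1)*L with hEdef
  have hE : 0 < E := by positivity
  have hidx1 : ∀ i : ℕ, 1 ≤ idx i := by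
    intro i; unfold idx
    have : (0:ℝ) ≤ (i:ℝ) := Nat.cast_nonneg i
    linarith
  set G2 : ℕ → ℝ := fun i => ((idx i)^(1+2*α2))^2 / ((idx i)^(1+2*α2)+(n:ℝ))^2 with hG2
  set q : ℕ → ℝ := fun i => min 1 (((n:ℝ)/(idx i)^(1+2*α1))^2) with hq
  have step : ∀ i ∈ Finset.range k,
      ((idx i)^(2+4*α1)/((idx i)^(1+2*α1)+(n:ℝ))^2
        - (idx i)^(2+4*α2)/((idx i)^(1+2*α2)+(n:ℝ))^2)^2 * (2*(θ0 i)^2/(n:ℝ) + 4/(n:ℝ)^2)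
      ≤ E^2 * G2 i * (2*(θ0 i)^2/(n:ℝ)) + E^2 * q i * (4/(n:ℝ)^2) := by
    intro i hi
    have hx1 : 1 ≤ idx i := hidx1 i
    have hx0 : 0 < idx i := lt_of_lt_of_le one_pos hx1
    have hlogx0 : 0 ≤ Real.log (idx i) := Real.log_nonneg hx1
    have hik : (idx i) ≤ (n:ℝ)^(2/(1+4*D)) := by
      have h1 : (i:ℝ)+1 ≤ (k:ℝ) := by exact_mod_cast Finset.mem_range.1 hi
      have h2 : (k:ℝ) ≤ (n:ℝ)^(2/(1+4*D)) := Nat.floor_le (by positivity)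
      calc idx i = (i:ℝ)+1 := rfl
        _ ≤ _ := le_trans h1 h2
    have hlogx : Real.log (idx i) ≤ 2*L := by
      calc Real.log (idx i) ≤ Real.log ((n:ℝ)^(2/(1+4*D))) := Real.log_le_log hx0 hik
        _ = (2/(1+4*D)) * L := Real.log_rpow hN0 _
        _ ≤ 2*L := by
            apply mul_le_mul_of_nonneg_right ?_ hL.le
            rw [div_le_iff₀ (by linarith)]
            nlinarith
    set t1 := (idx i)^(1+2*α1) with ht1def
    set t2 := (idx i)^(1+2*α2) with ht2def
    have ht1 : 0 < t1 := Real.rpow_pos_of_pos hx0 _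
    have ht12 : t1 ≤ t2 := Real.rpow_le_rpow_of_exponent_le hx1 (by linarith)
    have hrr : 1 - t1/t2 ≤ 2*(α2-α1)*Real.log (idx i) := by
      have hdiv : t1/t2 = (idx i)^(-(2*(α2-α1))) := by
        rw [ht1def, ht2def, ← Real.rpow_sub hx0]
        congr 1; ring
      rw [hdiv]
      exact sv6_one_sub_rpow_le _ _ hx1
    obtain ⟨hmono, hle1, hc, hd⟩ :=
      sv6_core (n:ℝ) t1 t2 (2*(α2-α1)*Real.log (idx i)) hN0 ht1 ht12 hrr
    have hr2E : 2*(2*(α2-α1)*Real.log (idx i)) ≤ E := by rw [hEdef]; nlinarith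
    have hG2nn : 0 ≤ t2^2/(t2+(n:ℝ))^2 := by positivity
    have hdnn : 0 ≤ t2^2/(t2+(n:ℝ))^2 - t1^2/(t1+(n:ℝ))^2 := by linarith
    have hb1 : t2^2/(t2+(n:ℝ))^2 - t1^2/(t1+(n:ℝ))^2 ≤ E * (t2^2/(t2+(n:ℝ))^2) :=
      le_trans hc (mul_le_mul_of_nonneg_right hr2E hG2nn)
    have hb2 : t2^2/(t2+(n:ℝ))^2 - t1^2/(t1+(n:ℝ))^2 ≤ E * ((n:ℝ)/t1) :=
      le_trans hd (mul_le_mul_of_nonneg_right hr2E (by positivity))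
    have hb3 : t2^2/(t2+(n:ℝ))^2 - t1^2/(t1+(n:ℝ))^2 ≤ E := by
      calc t2^2/(t2+(n:ℝ))^2 - t1^2/(t1+(n:ℝ))^2 ≤ E * (t2^2/(t2+(n:ℝ))^2) := hb1
        _ ≤ E * 1 := mul_le_mul_of_nonneg_left hle1 hE.le
        _ = E := mul_one E
    have hsq1 : (t2^2/(t2+(n:ℝ))^2 - t1^2/(t1+(n:ℝ))^2)^2 ≤ E^2 * G2 i := by
      have hg : G2 i = t2^2/(t2+(n:ℝ))^2 := rfl
      rw [hg]
      have h1 : (t2^2/(t2+(n:ℝ))^2 - t1^2/(t1+(n:ℝ))^2)^2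
          ≤ (E * (t2^2/(t2+(n:ℝ))^2))^2 := pow_le_pow_left₀ hdnn hb1 2
      nlinarith [sq_nonneg E, hG2nn, hle1]
    have hsq2 : (t2^2/(t2+(n:ℝ))^2 - t1^2/(t1+(n:ℝ))^2)^2 ≤ E^2 * q i := by
      have hq1 : (t2^2/(t2+(n:ℝ))^2 - t1^2/(t1+(n:ℝ))^2)^2 ≤ E^2 * 1 := by nlinarith
      have hq2 : (t2^2/(t2+(n:ℝ))^2 - t1^2/(t1+(n:ℝ))^2)^2 ≤ E^2 * (((n:ℝ)/t1)^2) := by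
        have := pow_le_pow_left₀ hdnn hb2 2
        nlinarith [this]
      have hqe : q i = min 1 (((n:ℝ)/t1)^2) := rfl
      rw [hqe, mul_min_of_nonneg _ _ (sq_nonneg E)]
      exact le_min hq1 hq2
    have hpow1 : (idx i)^(2+4*α1) = t1^2 := by
      rw [ht1def, show (2+4*α1) = (1+2*α1)*(2:ℝ) by ring, Real.rpow_mul hx0.le, Real.rpow_two]
    have hpow2 : (idx i)^(2+4*α2) = t2^2 := by
      rw [ht2def, show (2+4*α2) = (1+2*α2)*(2:ℝ) by ring, Real.rpow_mul hx0.le, Real.rpow_two]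
    rw [hpow1, hpow2]
    have hswap : (t1^2/(t1+(n:ℝ))^2 - t2^2/(t2+(n:ℝ))^2)^2
        = (t2^2/(t2+(n:ℝ))^2 - t1^2/(t1+(n:ℝ))^2)^2 := by ring
    rw [hswap]
    have hθnn : 0 ≤ 2*(θ0 i)^2/(n:ℝ) := by positivity
    have h4nn : 0 ≤ 4/(n:ℝ)^2 := by positivity
    calc (t2^2/(t2+(n:ℝ))^2 - t1^2/(t1+(n:ℝ))^2)^2 * (2*(θ0 i)^2/(n:ℝ) + 4/(n:ℝ)^2)
        = (t2^2/(t2+(n:ℝ))^2 - t1^2/(t1+(n:ℝ))^2)^2*(2*(θ0 i)^2/(n:ℝ))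
          + (t2^2/(t2+(n:ℝ))^2 - t1^2/(t1+(n:ℝ))^2)^2*(4/(n:ℝ)^2) := by ring
      _ ≤ (E^2*G2 i)*(2*(θ0 i)^2/(n:ℝ)) + (E^2*q i)*(4/(n:ℝ)^2) :=
          add_le_add (mul_le_mul_of_nonneg_right hsq1 hθnn)
            (mul_le_mul_of_nonneg_right hsq2 h4nn)
      _ = E^2 * G2 i * (2*(θ0 i)^2/(n:ℝ)) + E^2 * q i * (4/(n:ℝ)^2) := by ring
  have hB0 : 0 ≤ biasSqTrunc n k α2 θ0 := by
    unfold biasSqTrunc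
    apply Finset.sum_nonneg
    intro i _
    have hx0 : 0 < idx i := lt_of_lt_of_le one_pos (hidx1 i)
    positivity
  have hbias : ∑ i ∈ Finset.range k, E^2 * G2 i * (2*(θ0 i)^2/(n:ℝ))
      = 2*E^2/(n:ℝ) * biasSqTrunc n k α2 θ0 := by
    unfold biasSqTrunc
    rw [Finset.mul_sum]
    apply Finset.sum_congr rfl
    intro i _
    have hx0 : 0 < idx i := lt_of_lt_of_le one_pos (hidx1 i)
    have hpow2 : (idx i)^(2+4*α2) = ((idx i)^(1+2*α2))^2 := by
      rw [show (2+4*α2) = (1+2*α2)*(2:ℝ) by ring, Real.rpow_mul hx0.le, Real.rpow_two]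
    have hg : G2 i = ((idx i)^(1+2*α2))^2 / ((idx i)^(1+2*α2)+(n:ℝ))^2 := rfl
    rw [hg, hpow2]
    have hden : ((idx i)^(1+2*α2)+(n:ℝ)) ≠ 0 := by positivity
    field_simp
  have hqsum : ∑ i ∈ Finset.range k, E^2 * q i * (4/(n:ℝ)^2)
      ≤ E^2*(4/(n:ℝ)^2) * (3*(n:ℝ)^(1/(1+2*α1))) := by
    have h1 : ∑ i ∈ Finset.range k, E^2 * q i * (4/(n:ℝ)^2)
        = E^2*(4/(n:ℝ)^2) * ∑ i ∈ Finset.range k, q i := by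
      rw [Finset.mul_sum]
      apply Finset.sum_congr rfl
      intro i _
      ring
    rw [h1]
    apply mul_le_mul_of_nonneg_left ?_ (by positivity)
    exact sv6_sumq n k hn α1 hα1
  have hexp : (n:ℝ)^(1/(1+2*α1))/(n:ℝ)^2 ≤ (n:ℝ)^(-(1+4*D)/(1+2*D)) := by
    have h1 : (n:ℝ)^(1/(1+2*α1))/(n:ℝ)^2 = (n:ℝ)^(1/(1+2*α1) - 2) := by
      rw [Real.rpow_sub hN0, Real.rpow_two]
    rw [h1]
    apply Real.rpow_le_rpow_of_exponent_le hn1.le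
    have hd1 : (0:ℝ) < 1+2*D := by linarith
    have hd2 : (0:ℝ) < 1+2*α1 := by linarith
    have hfrac : (1+4*D)/(1+2*D) ≤ (1+4*α1)/(1+2*α1) := by
      rw [div_le_div_iff₀ hd1 hd2]
      nlinarith
    have heq : 1/(1+2*α1) - 2 = -((1+4*α1)/(1+2*α1)) := by
      field_simp
      ring
    rw [heq, show -(1+4*D)/(1+2*D) = -((1+4*D)/(1+2*D)) by ring]
    exact neg_le_neg hfrac
  calc ∑ i ∈ Finset.range k,
        ((idx i)^(2+4*α1)/((idx i)^(1+2*α1)+(n:ℝ))^2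
          - (idx i)^(2+4*α2)/((idx i)^(1+2*α2)+(n:ℝ))^2)^2 * (2*(θ0 i)^2/(n:ℝ) + 4/(n:ℝ)^2)
      ≤ ∑ i ∈ Finset.range k,
          (E^2 * G2 i * (2*(θ0 i)^2/(n:ℝ)) + E^2 * q i * (4/(n:ℝ)^2)) :=
        Finset.sum_le_sum step
    _ = (∑ i ∈ Finset.range k, E^2 * G2 i * (2*(θ0 i)^2/(n:ℝ)))
        + ∑ i ∈ Finset.range k, E^2 * q i * (4/(n:ℝ)^2) := Finset.sum_add_distrib
    _ ≤ 2*E^2/(n:ℝ) * biasSqTrunc n k α2 θ0 + E^2*(4/(n:ℝ)^2) * (3*(n:ℝ)^(1/(1+2*α1))) := by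
        rw [hbias]
        exact add_le_add (le_refl _) hqsum
    _ ≤ 768 * (α2-α1)^2 * L^2 *
          (biasSqTrunc n k α2 θ0 / (n:ℝ) + (n:ℝ)^(-(1+4*D)/(1+2*D))) := by
        have hEsq : E^2 = 64*(α2-α1)^2*L^2 := by rw [hEdef]; ring
        have h2 : E^2*(4/(n:ℝ)^2) * (3*(n:ℝ)^(1/(1+2*α1)))
            = 768*(α2-α1)^2*L^2 * ((n:ℝ)^(1/(1+2*α1))/(n:ℝ)^2) := by
          rw [hEsq]; ring
        have h3 : 768*(α2-α1)^2*L^2 * ((n:ℝ)^(1/(1+2*α1))/(n:ℝ)^2)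
            ≤ 768*(α2-α1)^2*L^2 * ((n:ℝ)^(-(1+4*D)/(1+2*D))) :=
          mul_le_mul_of_nonneg_left hexp (by positivity)
        have h4 : 2*E^2/(n:ℝ) * biasSqTrunc n k α2 θ0
            = 128*(α2-α1)^2*L^2 * (biasSqTrunc n k α2 θ0/(n:ℝ)) := by
          rw [hEsq]; ring
        have h5 : 0 ≤ (α2-α1)^2*L^2 * (biasSqTrunc n k α2 θ0/(n:ℝ)) := by
          apply mul_nonneg (by positivity) (div_nonneg hB0 hN0.le)
        rw [h2, h4]
        nlinarith [h3, h5]
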